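/- Let q ∈ ℂ with q^j ≠ 1 for all integers j ≥ 1 and let z ∈ ℂ with z ≠ 0. For w ∈ ℂ let φ_w be the linear functional on F defined by φ_w(|m⟩) = (q²)_m w^m/(q)_m, where (q²)_m = ∏_{j=1}^m (1 − q^{2j}). Then, with M(z) acting from the right on V* ⊗ V* ⊗ F* (V = ℂ², dual basis v₀*, v₁*) by (v_a* ⊗ v_b* ⊗ φ) ↦ ∑_{i,j∈{0,1}} v_i* ⊗ v_j* ⊗ (φ ∘ M(z)^{a,b}_{i,j}), the following are left eigenvectors of M(z) with eigenvalue 1: (i) v₀* ⊗ v₀* ⊗ φ and v₁* ⊗ v₁* ⊗ φ for every linear functional φ on F; (ii) (α v₁* ⊗ v₀* + β v₀* ⊗ v₁*) ⊗ φ_{α/(βz)} for every α, β ∈ ℂ with β ≠ 0. Explicitly, part (ii) states: for all k,l ∈ {0,1} with k+l = 1, ∑_{i+j=1} α^i β^j (φ_{α/(βz)} ∘ M(z)^{i,j}_{k,l}) = α^k β^l φ_{α/(βz)}. -/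

import Mathlib

open scoped TensorProduct
open scoped Classical

noncomputable section

/-- The Fock space: complex vector space with basis `{|m⟩ : m ∈ ℕ}`. -/
abbrev FockSp : Type := ℕ →₀ ℂ

/-- basis vector `|m⟩` -/
def ket (m : ℕ) : FockSp := Finsupp.single m 1

/-- linear operator on the Fock space determined by its values on basis vectors -/
def opOfFun (g : ℕ → FockSp) : Module.End ℂ FockSp :=
  Finsupp.lsum ℂ fun m => LinearMap.toSpanSingleton ℂ FockSp (g m)

/-- `a⁺|m⟩ = |m+1⟩` -/
def aPlus : Module.End ℂ FockSp := opOfFun fun m => ket (m + 1)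

/-- `a⁻|m⟩ = (1-q^{2m})|m-1⟩`; at `q = 0` this is `a⁻|m⟩ = |m-1⟩` with `|-1⟩ = 0` -/
def aMinus (q : ℂ) : Module.End ℂ FockSp :=
  opOfFun fun m => (1 - q ^ (2 * m)) • ket (m - 1)

/-- `k|m⟩ = (-q)^m|m⟩`; at `q = 0` this is `k|m⟩ = δ_{m,0}|m⟩` -/
def kOp (q : ℂ) : Module.End ℂ FockSp := opOfFun fun m => (-q) ^ m • ket m

/-- `k̃|m⟩ = q^m|m⟩` -/
def ktOp (q : ℂ) : Module.End ℂ FockSp := opOfFun fun m => q ^ m • ket m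

/-- numerical value of a `{0,1}`-valued edge variable (`false ↔ 0`, `true ↔ 1`) -/
def bv (b : Bool) : ℕ := cond b 1 0

/-- The 3D `M` operator: `Mop q z a b i j` is `M(z)^{a,b}_{i,j}`. -/
def Mop (q z : ℂ) : Bool → Bool → Bool → Bool → Module.End ℂ FockSp
  | false, false, false, false => 1
  | true, true, true, true => 1
  | false, true, true, false => z • aPlus
  | true, false, false, true => z⁻¹ • aMinus q
  | false, true, false, true => ktOp q
  | true, false, true, false => (-q) • ktOp q
  | _, _, _, _ => 0

/-- `(q)_m = ∏_{j=1}^m (1 - q^j)` -/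
def qPoch (q : ℂ) (m : ℕ) : ℂ := ∏ j ∈ Finset.range m, (1 - q ^ (j + 1))
/-- `(q²)_m = ∏_{j=1}^m (1 - q^{2j})` -/
def qPoch2 (q : ℂ) (m : ℕ) : ℂ := ∏ j ∈ Finset.range m, (1 - q ^ (2 * (j + 1)))

/-- linear functional on the Fock space determined by its values on basis vectors -/
def dualOf (g : ℕ → ℂ) : FockSp →ₗ[ℂ] ℂ :=
  Finsupp.lsum ℂ fun m => LinearMap.toSpanSingleton ℂ ℂ (g m)

/-- the functional `φ_w` with `φ_w(|m⟩) = (q²)_m w^m/(q)_m` -/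
def phiW (q w : ℂ) : FockSp →ₗ[ℂ] ℂ := dualOf fun m => qPoch2 q m * w ^ m / qPoch q m

set_option maxHeartbeats 1000000 in
lemma opOfFun_ket (g : ℕ → FockSp) (m : ℕ) : opOfFun g (ket m) = g m := by
  simp [opOfFun, ket]

lemma dualOf_ket (g : ℕ → ℂ) (m : ℕ) : dualOf g (ket m) = g m := by
  simp [dualOf, ket]

lemma fock_ext {f g : FockSp →ₗ[ℂ] ℂ} (h : ∀ m, f (ket m) = g (ket m)) : f = g := by
  apply Finsupp.lhom_ext'
  intro m
  apply LinearMap.ext_ring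
  simpa [ket] using h m

lemma qPoch_succ (q : ℂ) (m : ℕ) : qPoch q (m+1) = qPoch q m * (1 - q ^ (m+1)) := by
  simp [qPoch, Finset.prod_range_succ]

lemma qPoch2_succ (q : ℂ) (m : ℕ) :
    qPoch2 q (m+1) = qPoch2 q m * (1 - q ^ (2*(m+1))) := by
  simp [qPoch2, Finset.prod_range_succ]

/-- left eigenvectors of `M(z)` with eigenvalue 1, where `M(z)` acts from
the right on `V* ⊗ V* ⊗ F*` by `v_a*⊗v_b*⊗φ ↦ ∑_{i,j} v_i*⊗v_j*⊗(φ ∘ M(z)^{a,b}_{i,j})`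
(a vector `ψ : Bool → Bool → F*` records the coefficients w.r.t. the dual basis):
(i) `v₀*⊗v₀*⊗φ` and `v₁*⊗v₁*⊗φ` are fixed for every functional `φ`;
(ii) explicitly, for `k+l = 1`:
`∑_{i+j=1} α^i β^j (φ_{α/(βz)} ∘ M(z)^{i,j}_{k,l}) = α^k β^l φ_{α/(βz)}`. -/
theorem M_left_eigenvectors (q z : ℂ) (hq : ∀ j : ℕ, 1 ≤ j → q ^ j ≠ 1) (hz : z ≠ 0) :
    (∀ φ : FockSp →ₗ[ℂ] ℂ, ∀ i j : Bool,
        (∑ a : Bool, ∑ b : Bool,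
          (if a = false ∧ b = false then φ else 0) ∘ₗ Mop q z a b i j) =
        (if i = false ∧ j = false then φ else 0)) ∧
    (∀ φ : FockSp →ₗ[ℂ] ℂ, ∀ i j : Bool,
        (∑ a : Bool, ∑ b : Bool,
          (if a = true ∧ b = true then φ else 0) ∘ₗ Mop q z a b i j) =
        (if i = true ∧ j = true then φ else 0)) ∧
    (∀ α β : ℂ, β ≠ 0 → ∀ k l : Bool, bv k + bv l = 1 →
        (∑ i : Bool, ∑ j : Bool,
          if bv i + bv j = 1 then
            (α ^ bv i * β ^ bv j) • (phiW q (α / (β * z)) ∘ₗ Mop q z i j k l)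
          else 0) =
        (α ^ bv k * β ^ bv l) • phiW q (α / (β * z))) := by
  have hP : ∀ m, qPoch q m ≠ 0 := by
    intro m
    refine Finset.prod_ne_zero_iff.mpr fun j _ => ?_
    intro h
    exact hq (j+1) (by omega) (by linear_combination -h)
  have hq1 : ∀ m : ℕ, (1 : ℂ) - q ^ (m+1) ≠ 0 := by
    intro m h
    exact hq (m+1) (by omega) (by linear_combination -h)
  have hc : ∀ (w : ℂ) (n : ℕ), qPoch2 q (n+1) * w ^ (n+1) / qPoch q (n+1) =
      (1 + q ^ (n+1)) * w * (qPoch2 q n * w ^ n / qPoch q n) := by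
    intro w n
    rw [qPoch_succ, qPoch2_succ]
    have h2 : (1 : ℂ) - q ^ (2*(n+1)) = (1 - q ^ (n+1)) * (1 + q ^ (n+1)) := by ring
    rw [h2]
    field_simp [hP n, hq1 n]
    ring
  refine ⟨?_, ?_, ?_⟩
  · intro φ i j
    cases i <;> cases j <;>
      simp [Fintype.sum_bool, Mop, Module.End.one_eq_id, LinearMap.comp_id]
  · intro φ i j
    cases i <;> cases j <;>
      simp [Fintype.sum_bool, Mop, Module.End.one_eq_id, LinearMap.comp_id]
  · intro α β hβ k l hkl
    have hwz : α / (β * z) * (β * z) = α := div_mul_cancel₀ _ (mul_ne_zero hβ hz)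
    set w : ℂ := α / (β * z) with hw
    clear_value w
    cases k <;> cases l <;> simp only [bv, cond] at hkl ⊢
    · omega
    · -- k = false, l = true
      apply fock_ext
      intro m
      simp only [Fintype.sum_bool, bv, cond, Mop, LinearMap.add_apply,
        LinearMap.smul_apply, LinearMap.comp_apply, LinearMap.zero_apply,
        smul_eq_mul, if_true, if_false, pow_zero, pow_one, one_mul, mul_one,
        Nat.reduceAdd, zero_add, add_zero]
      norm_num
      rw [aMinus, ktOp, opOfFun_ket, opOfFun_ket, map_smul, map_smul]
      simp only [phiW, dualOf_ket, smul_eq_mul]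
      cases m with
      | zero => simp [qPoch, qPoch2]
      | succ n =>
        simp only [Nat.add_sub_cancel]
        rw [hc w n]
        field_simp [hP n]
        linear_combination (-((1 - q ^ (2*(n+1))) * qPoch2 q n * w ^ n)) * hwz
    · -- k = true, l = false
      apply fock_ext
      intro m
      simp only [Fintype.sum_bool, bv, cond, Mop, LinearMap.add_apply,
        LinearMap.smul_apply, LinearMap.comp_apply, LinearMap.zero_apply,
        smul_eq_mul, if_true, if_false, pow_zero, pow_one, one_mul, mul_one,
        Nat.reduceAdd, zero_add, add_zero]
      norm_num
      rw [aPlus, ktOp, opOfFun_ket, opOfFun_ket, map_smul]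
      simp only [phiW, dualOf_ket, smul_eq_mul]
      rw [hc w m]
      linear_combination ((1 + q ^ (m+1)) * (qPoch2 q m * w ^ m / qPoch q m)) * hwz
    · omega

end
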